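/- arXiv:0906.1131 — 4 statements merged into one kernel-verified Lean document; each statement's English description precedes it below -/
import Mathlib

section
/- Let $X_0, X_1, X_2$ be independent random variables with $X_i$ Gamma-distributed with shape parameter $a_i > 0$ (and rate 1). Define $F_1 = X_1/X_0$ and $F_2 = X_2/X_0$. Then the joint density of $(F_1,F_2)$ on $(0,\infty)^2$ is $f(f_1,f_2) = \frac{\Gamma(a_0+a_1+a_2)}{\Gamma(a_0)\Gamma(a_1)\Gamma(a_2)} \cdot \frac{f_1^{a_1-1} f_2^{a_2-1}}{(1+f_1+f_2)^{a_0+a_1+a_2}}$. -/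
open MeasureTheory ProbabilityTheory Real
open scoped ENNReal

lemma lintegral_scale (c : ℝ) (hc : 0 < c) (f : ℝ → ℝ≥0∞) (hf : Measurable f) :
    ∫⁻ x, f x = ENNReal.ofReal c * ∫⁻ y, f (c * y) := by
  have hmap : ∫⁻ y, f (c * y) = ∫⁻ x, f x ∂(Measure.map (c * ·) volume) :=
    (lintegral_map hf (measurable_const_mul c)).symm
  rw [hmap, Real.map_volume_mul_left hc.ne', lintegral_smul_measure, smul_eq_mul, ← mul_assoc,
    ← ENNReal.ofReal_mul hc.le, abs_of_pos (inv_pos.2 hc), mul_inv_cancel₀ hc.ne',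
    ENNReal.ofReal_one, one_mul]

lemma restrict_Iic_gammaPDF_zero (A r : ℝ) :
    ∫⁻ x in Set.Iic (0:ℝ), gammaPDF A r x = 0 := by
  have hae : ∀ᵐ (x : ℝ) ∂(volume.restrict (Set.Iic (0:ℝ))), gammaPDF A r x = 0 := by
    have h0 : ∀ᵐ (x : ℝ) ∂(volume.restrict (Set.Iic (0:ℝ))), x ≠ 0 :=
      ae_restrict_of_ae (ae_iff.2 (by simp [Real.volume_singleton]))
    have h1 : ∀ᵐ (x : ℝ) ∂(volume.restrict (Set.Iic (0:ℝ))), x ∈ Set.Iic (0:ℝ) :=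
      ae_restrict_mem measurableSet_Iic
    filter_upwards [h0, h1] with x hx0 hx1
    exact gammaPDF_of_neg (lt_of_le_of_ne hx1 hx0)
  simp [lintegral_congr_ae hae]

lemma lintegral_rpow_exp (A r : ℝ) (hA : 0 < A) (hr : 0 < r) :
    ∫⁻ x in Set.Ioi (0:ℝ), ENNReal.ofReal (x ^ (A - 1) * Real.exp (-(r * x)))
      = ENNReal.ofReal (Gamma A / r ^ A) := by
  have hGpos : 0 < Gamma A := Real.Gamma_pos_of_pos hA
  have hrA : 0 < r ^ A := Real.rpow_pos_of_pos hr A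
  have h1 : (1:ℝ≥0∞) = ∫⁻ x in Set.Ioi (0:ℝ), gammaPDF A r x := by
    rw [← lintegral_gammaPDF_eq_one hA hr, ← lintegral_add_compl (gammaPDF A r) measurableSet_Ioi]
    rw [show (Set.Ioi (0:ℝ))ᶜ = Set.Iic 0 by simp, restrict_Iic_gammaPDF_zero, add_zero]
  have h2 : ∫⁻ x in Set.Ioi (0:ℝ), gammaPDF A r x
      = ENNReal.ofReal (r ^ A / Gamma A) *
        ∫⁻ x in Set.Ioi (0:ℝ), ENNReal.ofReal (x ^ (A - 1) * Real.exp (-(r * x))) := by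
    rw [← lintegral_const_mul _ (by fun_prop)]
    refine setLIntegral_congr_fun measurableSet_Ioi (fun x hx => ?_)
    rw [gammaPDF_of_nonneg (le_of_lt hx), ← ENNReal.ofReal_mul (by positivity), mul_assoc]
  rw [h2] at h1
  have hne : ENNReal.ofReal (r ^ A / Gamma A) ≠ 0 := by
    simp [ENNReal.ofReal_eq_zero, not_le, div_pos hrA hGpos]
  have h3 := ENNReal.eq_inv_of_mul_eq_one_left (by rw [mul_comm]; exact h1.symm)
  rw [h3, ← ENNReal.ofReal_inv_of_pos (div_pos hrA hGpos), inv_div]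

lemma withDensity_prod_aux {α β : Type*} [MeasurableSpace α] [MeasurableSpace β]
    (μ : Measure α) (ν : Measure β) [SigmaFinite μ] [SigmaFinite ν]
    (f : α → ℝ≥0∞) (g : β → ℝ≥0∞) (hf : Measurable f) (hg : Measurable g)
    [SigmaFinite (μ.withDensity f)] [SigmaFinite (ν.withDensity g)] :
    (μ.withDensity f).prod (ν.withDensity g)
      = (μ.prod ν).withDensity (fun p => f p.1 * g p.2) := by
  refine Measure.prod_eq fun s t hs ht => ?_
  rw [withDensity_apply _ (hs.prod ht), ← Measure.prod_restrict,
    lintegral_prod_mul hf.aemeasurable hg.aemeasurable,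
    withDensity_apply _ hs, withDensity_apply _ ht]

lemma lintegral_scale2 (c : ℝ) (hc : 0 < c) (f : ℝ × ℝ → ℝ≥0∞) (hf : Measurable f) :
    ∫⁻ q : ℝ × ℝ, f q
      = (ENNReal.ofReal c * ENNReal.ofReal c) * ∫⁻ q : ℝ × ℝ, f (c * q.1, c * q.2) := by
  have hf2 : Measurable (fun q : ℝ × ℝ => f (c * q.1, c * q.2)) := by fun_prop
  rw [Measure.volume_eq_prod, lintegral_prod _ hf.aemeasurable, lintegral_prod _ hf2.aemeasurable]
  rw [lintegral_scale c hc (fun x => ∫⁻ y, f (x, y)) hf.lintegral_prod_right']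
  have hinner : ∀ x : ℝ, (∫⁻ y, f (c * x, y)) = ENNReal.ofReal c * ∫⁻ y, f (c * x, c * y) :=
    fun x => lintegral_scale c hc (fun y => f (c * x, y)) (by fun_prop)
  simp_rw [hinner]
  rw [lintegral_const_mul' _ _ ENNReal.ofReal_ne_top, mul_assoc]

lemma Jpos (a₀ a₁ a₂ : ℝ) (ha₀ : 0 < a₀) (ha₁ : 0 < a₁) (ha₂ : 0 < a₂)
    (p₁ p₂ : ℝ) (hp₁ : 0 < p₁) (hp₂ : 0 < p₂) :
    ∫⁻ x in Set.Ioi (0:ℝ), gammaPDF a₀ 1 x * (ENNReal.ofReal x * ENNReal.ofReal x) *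
        (gammaPDF a₁ 1 (x * p₁) * gammaPDF a₂ 1 (x * p₂))
      = ENNReal.ofReal (Gamma (a₀ + a₁ + a₂) / (Gamma a₀ * Gamma a₁ * Gamma a₂) *
          (p₁ ^ (a₁ - 1) * p₂ ^ (a₂ - 1) / (1 + p₁ + p₂) ^ (a₀ + a₁ + a₂))) := by
  have hG₀ : 0 < Gamma a₀ := Real.Gamma_pos_of_pos ha₀
  have hG₁ : 0 < Gamma a₁ := Real.Gamma_pos_of_pos ha₁
  have hG₂ : 0 < Gamma a₂ := Real.Gamma_pos_of_pos ha₂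
  have hr : 0 < 1 + p₁ + p₂ := by linarith
  have hA : 0 < a₀ + a₁ + a₂ := by linarith
  have hcnn : 0 ≤ p₁ ^ (a₁ - 1) * p₂ ^ (a₂ - 1) / (Gamma a₀ * Gamma a₁ * Gamma a₂) := by
    positivity
  have step : ∀ x ∈ Set.Ioi (0:ℝ),
      gammaPDF a₀ 1 x * (ENNReal.ofReal x * ENNReal.ofReal x) *
          (gammaPDF a₁ 1 (x * p₁) * gammaPDF a₂ 1 (x * p₂))
        = ENNReal.ofReal (p₁ ^ (a₁ - 1) * p₂ ^ (a₂ - 1) / (Gamma a₀ * Gamma a₁ * Gamma a₂)) *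
            ENNReal.ofReal (x ^ (a₀ + a₁ + a₂ - 1) * Real.exp (-((1 + p₁ + p₂) * x))) := by
    intro x hx
    have hx0 : (0:ℝ) < x := hx
    have m1 : ENNReal.ofReal x * ENNReal.ofReal x = ENNReal.ofReal (x * x) :=
      (ENNReal.ofReal_mul hx0.le).symm
    have m2 : gammaPDF a₁ 1 (x * p₁) * gammaPDF a₂ 1 (x * p₂)
        = ENNReal.ofReal (gammaPDFReal a₁ 1 (x * p₁) * gammaPDFReal a₂ 1 (x * p₂)) :=
      (ENNReal.ofReal_mul (gammaPDFReal_nonneg ha₁ one_pos _)).symm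
    have m3 : gammaPDF a₀ 1 x * ENNReal.ofReal (x * x)
        = ENNReal.ofReal (gammaPDFReal a₀ 1 x * (x * x)) :=
      (ENNReal.ofReal_mul (gammaPDFReal_nonneg ha₀ one_pos _)).symm
    rw [m1, m2, show gammaPDF a₀ 1 x = ENNReal.ofReal (gammaPDFReal a₀ 1 x) from rfl] at *
    rw [m3, ← ENNReal.ofReal_mul (mul_nonneg (gammaPDFReal_nonneg ha₀ one_pos _) (by positivity)),
      ← ENNReal.ofReal_mul hcnn]
    congr 1
    have hxp₁ : (0:ℝ) ≤ x * p₁ := by positivity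
    have hxp₂ : (0:ℝ) ≤ x * p₂ := by positivity
    simp only [gammaPDFReal, if_pos hx0.le, if_pos hxp₁, if_pos hxp₂, Real.one_rpow]
    have hmul1 : (x * p₁) ^ (a₁ - 1) = x ^ (a₁ - 1) * p₁ ^ (a₁ - 1) :=
      Real.mul_rpow hx0.le hp₁.le
    have hmul2 : (x * p₂) ^ (a₂ - 1) = x ^ (a₂ - 1) * p₂ ^ (a₂ - 1) :=
      Real.mul_rpow hx0.le hp₂.le
    have hxpow : x ^ (a₀ + a₁ + a₂ - 1)
        = x ^ (a₀ - 1) * x ^ (a₁ - 1) * x ^ (a₂ - 1) * (x * x) := by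
      have h1 : a₀ + a₁ + a₂ - 1 = (a₀ - 1) + ((a₁ - 1) + ((a₂ - 1) + (1 + 1))) := by ring
      rw [h1, Real.rpow_add hx0, Real.rpow_add hx0, Real.rpow_add hx0, Real.rpow_add hx0,
        Real.rpow_one]
      ring
    have hexp : Real.exp (-((1 + p₁ + p₂) * x))
        = Real.exp (-(1 * x)) * (Real.exp (-(1 * (x * p₁))) * Real.exp (-(1 * (x * p₂)))) := by
      rw [← Real.exp_add, ← Real.exp_add]; congr 1; ring
    rw [hmul1, hmul2, hxpow, hexp]
    ring
  rw [setLIntegral_congr_fun measurableSet_Ioi step,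
    lintegral_const_mul' _ _ ENNReal.ofReal_ne_top, lintegral_rpow_exp _ _ hA hr,
    ← ENNReal.ofReal_mul hcnn]
  congr 1
  ring

lemma key (a₀ a₁ a₂ : ℝ) (ha₀ : 0 < a₀) (ha₁ : 0 < a₁) (ha₂ : 0 < a₂) :
    Measure.map (fun z : ℝ × ℝ × ℝ => (z.2.1 / z.1, z.2.2 / z.1))
        ((volume : Measure (ℝ × ℝ × ℝ)).withDensity
          (fun z => gammaPDF a₀ 1 z.1 * (gammaPDF a₁ 1 z.2.1 * gammaPDF a₂ 1 z.2.2)))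
      = (volume : Measure (ℝ × ℝ)).withDensity (fun p =>
          Set.indicator (Set.Ioi (0:ℝ) ×ˢ Set.Ioi (0:ℝ))
            (fun p => ENNReal.ofReal
              (Gamma (a₀ + a₁ + a₂) / (Gamma a₀ * Gamma a₁ * Gamma a₂) *
                (p.1 ^ (a₁ - 1) * p.2 ^ (a₂ - 1) /
                  (1 + p.1 + p.2) ^ (a₀ + a₁ + a₂)))) p) := by
  have mP₀ : Measurable (gammaPDF a₀ 1) := (measurable_gammaPDFReal a₀ 1).ennreal_ofReal
  have mP₁ : Measurable (gammaPDF a₁ 1) := (measurable_gammaPDFReal a₁ 1).ennreal_ofReal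
  have mP₂ : Measurable (gammaPDF a₂ 1) := (measurable_gammaPDFReal a₂ 1).ennreal_ofReal
  have hg : Measurable (fun z : ℝ × ℝ × ℝ => (z.2.1 / z.1, z.2.2 / z.1)) := by fun_prop
  refine Measure.ext fun s hs => ?_
  have hI : Measurable (s.indicator (1 : ℝ × ℝ → ℝ≥0∞)) := measurable_one.indicator hs
  have hIne : ∀ q, s.indicator (1 : ℝ × ℝ → ℝ≥0∞) q ≠ ⊤ := by
    intro q; by_cases h : q ∈ s <;> simp [h]
  set I : ℝ × ℝ → ℝ≥0∞ := s.indicator 1 with hIdef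
  set D : ℝ × ℝ → ℝ≥0∞ := fun p =>
    Set.indicator (Set.Ioi (0:ℝ) ×ˢ Set.Ioi (0:ℝ))
      (fun p => ENNReal.ofReal
        (Gamma (a₀ + a₁ + a₂) / (Gamma a₀ * Gamma a₁ * Gamma a₂) *
          (p.1 ^ (a₁ - 1) * p.2 ^ (a₂ - 1) /
            (1 + p.1 + p.2) ^ (a₀ + a₁ + a₂)))) p with hDdef
  -- the inner (x₀-) integral equals D almost everywhere
  have hJD : ∀ᵐ q : ℝ × ℝ ∂(volume : Measure (ℝ × ℝ)),
      (∫⁻ x in Set.Ioi (0:ℝ), gammaPDF a₀ 1 x * (ENNReal.ofReal x * ENNReal.ofReal x) *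
        (gammaPDF a₁ 1 (x * q.1) * gammaPDF a₂ 1 (x * q.2))) = D q := by
    have hz1 : (volume : Measure (ℝ × ℝ)) {q : ℝ × ℝ | q.1 = 0} = 0 := by
      rw [Measure.volume_eq_prod,
        show {q : ℝ × ℝ | q.1 = 0} = ({(0:ℝ)} : Set ℝ) ×ˢ (Set.univ : Set ℝ) by
          ext q; simp [Set.mem_prod, Prod.ext_iff, eq_comm], Measure.prod_prod]
      simp
    have hz2 : (volume : Measure (ℝ × ℝ)) {q : ℝ × ℝ | q.2 = 0} = 0 := by
      rw [Measure.volume_eq_prod,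
        show {q : ℝ × ℝ | q.2 = 0} = (Set.univ : Set ℝ) ×ˢ ({(0:ℝ)} : Set ℝ) by
          ext q; simp [Set.mem_prod, Prod.ext_iff, eq_comm], Measure.prod_prod]
      simp
    have hae1 : ∀ᵐ q : ℝ × ℝ ∂(volume : Measure (ℝ × ℝ)), q.1 ≠ 0 := by
      rw [ae_iff]; simpa using hz1
    have hae2 : ∀ᵐ q : ℝ × ℝ ∂(volume : Measure (ℝ × ℝ)), q.2 ≠ 0 := by
      rw [ae_iff]; simpa using hz2
    filter_upwards [hae1, hae2] with q hq1 hq2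
    rcases lt_or_gt_of_ne hq1 with hq1' | hq1'
    · have hD0 : D q = 0 := by
        rw [hDdef]
        exact Set.indicator_of_notMem (by simp [Set.mem_prod]; intro h; linarith) _
      rw [hD0]
      rw [setLIntegral_congr_fun measurableSet_Ioi
        (fun x hx => ?_), lintegral_zero]
      rw [gammaPDF_of_neg (mul_neg_of_pos_of_neg hx hq1')]
      simp
    rcases lt_or_gt_of_ne hq2 with hq2' | hq2'
    · have hD0 : D q = 0 := by
        rw [hDdef]
        exact Set.indicator_of_notMem (by simp [Set.mem_prod]; intro h; linarith) _
      rw [hD0]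
      rw [setLIntegral_congr_fun measurableSet_Ioi
        (fun x hx => ?_), lintegral_zero]
      rw [gammaPDF_of_neg (mul_neg_of_pos_of_neg hx hq2')]
      simp
    · simp only [hDdef]
      rw [Set.indicator_of_mem (Set.mem_prod.2 ⟨Set.mem_Ioi.2 hq1', Set.mem_Ioi.2 hq2'⟩)]
      exact Jpos a₀ a₁ a₂ ha₀ ha₁ ha₂ q.1 q.2 hq1' hq2'
  -- main chain
  rw [Measure.map_apply hg hs, withDensity_apply _ (hg hs), withDensity_apply _ hs,
    ← lintegral_indicator (hg hs), ← lintegral_indicator hs]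
  calc
    ∫⁻ z : ℝ × ℝ × ℝ, ((fun z : ℝ × ℝ × ℝ => (z.2.1 / z.1, z.2.2 / z.1)) ⁻¹' s).indicator
        (fun z => gammaPDF a₀ 1 z.1 * (gammaPDF a₁ 1 z.2.1 * gammaPDF a₂ 1 z.2.2)) z
      = ∫⁻ z : ℝ × ℝ × ℝ,
          gammaPDF a₀ 1 z.1 * ((gammaPDF a₁ 1 z.2.1 * gammaPDF a₂ 1 z.2.2) *
            I (z.2.1 / z.1, z.2.2 / z.1)) := by
        refine lintegral_congr fun z => ?_
        by_cases h : (z.2.1 / z.1, z.2.2 / z.1) ∈ s <;>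
          simp [hIdef, Set.indicator, Set.mem_preimage, h, mul_assoc]
    _ = ∫⁻ x₀ : ℝ, ∫⁻ q : ℝ × ℝ,
          gammaPDF a₀ 1 x₀ * ((gammaPDF a₁ 1 q.1 * gammaPDF a₂ 1 q.2) *
            I (q.1 / x₀, q.2 / x₀)) := by
        rw [Measure.volume_eq_prod, lintegral_prod]
        exact (((mP₀.comp measurable_fst).mul
          (((mP₁.comp (measurable_fst.comp measurable_snd)).mul
            (mP₂.comp (measurable_snd.comp measurable_snd))).mul
          (hI.comp (by fun_prop)))).aemeasurable)
    _ = ∫⁻ x₀ : ℝ, gammaPDF a₀ 1 x₀ * ∫⁻ q : ℝ × ℝ,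
          (gammaPDF a₁ 1 q.1 * gammaPDF a₂ 1 q.2) * I (q.1 / x₀, q.2 / x₀) := by
        refine lintegral_congr fun x₀ => ?_
        exact lintegral_const_mul' _ _ (by rw [gammaPDF_eq]; exact ENNReal.ofReal_ne_top)
    _ = ∫⁻ x₀ in Set.Ioi (0:ℝ), gammaPDF a₀ 1 x₀ * ∫⁻ q : ℝ × ℝ,
          (gammaPDF a₁ 1 q.1 * gammaPDF a₂ 1 q.2) * I (q.1 / x₀, q.2 / x₀) := by
        rw [← lintegral_add_compl (fun x₀ => gammaPDF a₀ 1 x₀ * ∫⁻ q : ℝ × ℝ,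
            (gammaPDF a₁ 1 q.1 * gammaPDF a₂ 1 q.2) * I (q.1 / x₀, q.2 / x₀))
          measurableSet_Ioi,
          show (Set.Ioi (0:ℝ))ᶜ = Set.Iic 0 by simp]
        have : ∫⁻ x₀ in Set.Iic (0:ℝ), gammaPDF a₀ 1 x₀ * ∫⁻ q : ℝ × ℝ,
            (gammaPDF a₁ 1 q.1 * gammaPDF a₂ 1 q.2) * I (q.1 / x₀, q.2 / x₀) = 0 := by
          have h0 : ∀ᵐ (x : ℝ) ∂(volume.restrict (Set.Iic (0:ℝ))), x ≠ 0 :=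
            ae_restrict_of_ae (ae_iff.2 (by simp [Real.volume_singleton]))
          have h1 : ∀ᵐ (x : ℝ) ∂(volume.restrict (Set.Iic (0:ℝ))), x ∈ Set.Iic (0:ℝ) :=
            ae_restrict_mem measurableSet_Iic
          rw [show (0:ℝ≥0∞) = ∫⁻ _ : ℝ in Set.Iic (0:ℝ), 0 by simp]
          refine lintegral_congr_ae ?_
          filter_upwards [h0, h1] with x hx0 hx1
          rw [gammaPDF_of_neg (lt_of_le_of_ne hx1 hx0), zero_mul]
        rw [this, add_zero]
    _ = ∫⁻ x₀ in Set.Ioi (0:ℝ), ∫⁻ q : ℝ × ℝ, I q *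
          (gammaPDF a₀ 1 x₀ * (ENNReal.ofReal x₀ * ENNReal.ofReal x₀) *
            (gammaPDF a₁ 1 (x₀ * q.1) * gammaPDF a₂ 1 (x₀ * q.2))) := by
        refine setLIntegral_congr_fun measurableSet_Ioi
          (fun x₀ hx₀ => ?_)
        have hx₀ : (0:ℝ) < x₀ := hx₀
        rw [lintegral_scale2 x₀ hx₀ (fun q => (gammaPDF a₁ 1 q.1 * gammaPDF a₂ 1 q.2) *
          I (q.1 / x₀, q.2 / x₀)) (((mP₁.comp measurable_fst).mul
            (mP₂.comp measurable_snd)).mul (hI.comp (by fun_prop)))]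
        simp only [mul_div_cancel_left₀ _ hx₀.ne']
        rw [← mul_assoc, ← lintegral_const_mul' _ _ (by
          exact ENNReal.mul_ne_top (by rw [gammaPDF_eq]; exact ENNReal.ofReal_ne_top)
            (ENNReal.mul_ne_top ENNReal.ofReal_ne_top ENNReal.ofReal_ne_top))]
        refine lintegral_congr fun q => ?_
        ring
    _ = ∫⁻ q : ℝ × ℝ, ∫⁻ x₀ in Set.Ioi (0:ℝ), I q *
          (gammaPDF a₀ 1 x₀ * (ENNReal.ofReal x₀ * ENNReal.ofReal x₀) *
            (gammaPDF a₁ 1 (x₀ * q.1) * gammaPDF a₂ 1 (x₀ * q.2))) := by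
        refine lintegral_lintegral_swap ?_
        apply Measurable.aemeasurable
        refine (hI.comp measurable_snd).mul ?_
        refine ((mP₀.comp measurable_fst).mul
          ((measurable_fst.ennreal_ofReal).mul (measurable_fst.ennreal_ofReal))).mul ?_
        exact (mP₁.comp (measurable_fst.mul (measurable_fst.comp measurable_snd))).mul
          (mP₂.comp (measurable_fst.mul (measurable_snd.comp measurable_snd)))
    _ = ∫⁻ q : ℝ × ℝ, I q * ∫⁻ x₀ in Set.Ioi (0:ℝ),
          gammaPDF a₀ 1 x₀ * (ENNReal.ofReal x₀ * ENNReal.ofReal x₀) *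
            (gammaPDF a₁ 1 (x₀ * q.1) * gammaPDF a₂ 1 (x₀ * q.2)) := by
        refine lintegral_congr fun q => ?_
        exact lintegral_const_mul' _ _ (hIne q)
    _ = ∫⁻ q : ℝ × ℝ, I q * D q := by
        refine lintegral_congr_ae ?_
        filter_upwards [hJD] with q hq
        rw [hq]
    _ = ∫⁻ q : ℝ × ℝ, s.indicator D q := by
        refine lintegral_congr fun q => ?_
        by_cases h : q ∈ s <;> simp [hIdef, Set.indicator, h]

theorem bivariate_gen_beta_II_density
    {Ω : Type*} [MeasureSpace Ω] [IsProbabilityMeasure (ℙ : Measure Ω)]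
    (a₀ a₁ a₂ : ℝ) (ha₀ : 0 < a₀) (ha₁ : 0 < a₁) (ha₂ : 0 < a₂)
    (X₀ X₁ X₂ : Ω → ℝ) (hm₀ : Measurable X₀) (hm₁ : Measurable X₁) (hm₂ : Measurable X₂)
    (hind : iIndepFun ![X₀, X₁, X₂] ℙ)
    (h₀ : Measure.map X₀ ℙ = gammaMeasure a₀ 1)
    (h₁ : Measure.map X₁ ℙ = gammaMeasure a₁ 1)
    (h₂ : Measure.map X₂ ℙ = gammaMeasure a₂ 1) :
    Measure.map (fun ω => (X₁ ω / X₀ ω, X₂ ω / X₀ ω)) ℙ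
      = (volume : Measure (ℝ × ℝ)).withDensity (fun p =>
          Set.indicator (Set.Ioi (0:ℝ) ×ˢ Set.Ioi (0:ℝ))
            (fun p => ENNReal.ofReal
              (Gamma (a₀ + a₁ + a₂) / (Gamma a₀ * Gamma a₁ * Gamma a₂) *
                (p.1 ^ (a₁ - 1) * p.2 ^ (a₂ - 1) /
                  (1 + p.1 + p.2) ^ (a₀ + a₁ + a₂)))) p) := by
  have hG₀ : 0 < Gamma a₀ := Real.Gamma_pos_of_pos ha₀
  have hG₁ : 0 < Gamma a₁ := Real.Gamma_pos_of_pos ha₁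
  have hG₂ : 0 < Gamma a₂ := Real.Gamma_pos_of_pos ha₂
  have hA : 0 < a₀ + a₁ + a₂ := by linarith
  have mP₀ : Measurable (gammaPDF a₀ 1) := (measurable_gammaPDFReal a₀ 1).ennreal_ofReal
  have mP₁ : Measurable (gammaPDF a₁ 1) := (measurable_gammaPDFReal a₁ 1).ennreal_ofReal
  have mP₂ : Measurable (gammaPDF a₂ 1) := (measurable_gammaPDFReal a₂ 1).ennreal_ofReal
  -- measurability of the family
  have hm : ∀ i, Measurable (![X₀, X₁, X₂] i) := by
    intro i; fin_cases i <;> simpa using ‹_›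
  -- the law of (X₁, X₂)
  have h12 : IndepFun X₁ X₂ ℙ := by
    have h := hind.indepFun (show (1:Fin 3) ≠ 2 by decide)
    simpa using h
  have hpair12 : Measure.map (fun ω => (X₁ ω, X₂ ω)) ℙ
      = (gammaMeasure a₁ 1).prod (gammaMeasure a₂ 1) := by
    rw [(indepFun_iff_map_prod_eq_prod_map_map hm₁.aemeasurable hm₂.aemeasurable).mp h12,
      h₁, h₂]
  -- the law of (X₀, (X₁, X₂))
  have hp0 : IndepFun X₀ (fun ω => (X₁ ω, X₂ ω)) ℙ := by
    have h := (hind.indepFun_prodMk hm 1 2 0 (by decide) (by decide)).symm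
    simpa using h
  have hlaw : Measure.map (fun ω => (X₀ ω, (X₁ ω, X₂ ω))) ℙ
      = (gammaMeasure a₀ 1).prod ((gammaMeasure a₁ 1).prod (gammaMeasure a₂ 1)) := by
    rw [(indepFun_iff_map_prod_eq_prod_map_map hm₀.aemeasurable
      (hm₁.prodMk hm₂).aemeasurable).mp hp0, h₀, hpair12]
  -- instances
  haveI i₁ : IsProbabilityMeasure ((volume : Measure ℝ).withDensity (gammaPDF a₁ 1)) :=
    isProbabilityMeasure_gammaMeasure ha₁ one_pos
  haveI i₂ : IsProbabilityMeasure ((volume : Measure ℝ).withDensity (gammaPDF a₂ 1)) :=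
    isProbabilityMeasure_gammaMeasure ha₂ one_pos
  haveI i₀ : IsProbabilityMeasure ((volume : Measure ℝ).withDensity (gammaPDF a₀ 1)) :=
    isProbabilityMeasure_gammaMeasure ha₀ one_pos
  -- product density
  have hinner : ((volume : Measure ℝ).withDensity (gammaPDF a₁ 1)).prod
        ((volume : Measure ℝ).withDensity (gammaPDF a₂ 1))
      = ((volume : Measure ℝ).prod (volume : Measure ℝ)).withDensity
          (fun q => gammaPDF a₁ 1 q.1 * gammaPDF a₂ 1 q.2) :=
    withDensity_prod_aux _ _ _ _ mP₁ mP₂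
  haveI i₁₂ : IsProbabilityMeasure
      (((volume : Measure ℝ).prod (volume : Measure ℝ)).withDensity
        (fun q => gammaPDF a₁ 1 q.1 * gammaPDF a₂ 1 q.2)) := by
    rw [← hinner]; infer_instance
  have hdens : (gammaMeasure a₀ 1).prod ((gammaMeasure a₁ 1).prod (gammaMeasure a₂ 1))
      = (volume : Measure (ℝ × ℝ × ℝ)).withDensity
          (fun z => gammaPDF a₀ 1 z.1 * (gammaPDF a₁ 1 z.2.1 * gammaPDF a₂ 1 z.2.2)) := by
    show ((volume : Measure ℝ).withDensity (gammaPDF a₀ 1)).prod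
        (((volume : Measure ℝ).withDensity (gammaPDF a₁ 1)).prod
          ((volume : Measure ℝ).withDensity (gammaPDF a₂ 1))) = _
    rw [hinner, withDensity_prod_aux (volume : Measure ℝ)
      ((volume : Measure ℝ).prod (volume : Measure ℝ)) (gammaPDF a₀ 1)
      (fun q : ℝ × ℝ => gammaPDF a₁ 1 q.1 * gammaPDF a₂ 1 q.2) mP₀
      (by exact (mP₁.comp measurable_fst).mul (mP₂.comp measurable_snd)),
      Measure.volume_eq_prod, Measure.volume_eq_prod]
  -- rewrite the LHS as a pushforward of the product measure
  have hg : Measurable (fun z : ℝ × ℝ × ℝ => (z.2.1 / z.1, z.2.2 / z.1)) := by fun_prop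
  have hcomp : Measure.map (fun ω => (X₁ ω / X₀ ω, X₂ ω / X₀ ω)) ℙ
      = Measure.map (fun z : ℝ × ℝ × ℝ => (z.2.1 / z.1, z.2.2 / z.1))
          ((volume : Measure (ℝ × ℝ × ℝ)).withDensity
            (fun z => gammaPDF a₀ 1 z.1 * (gammaPDF a₁ 1 z.2.1 * gammaPDF a₂ 1 z.2.2))) := by
    rw [← hdens, ← hlaw, Measure.map_map hg (hm₀.prodMk (hm₁.prodMk hm₂))]; rfl
  rw [hcomp]
  exact key a₀ a₁ a₂ ha₀ ha₁ ha₂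
end

section
/- For real parameters $a, b, c > 0$, the integral $\int_0^1 \int_0^1 \frac{u_1^{a-1} u_2^{b-1} (1-u_1)^{b+c-1} (1-u_2)^{a+c-1}}{(1-u_1 u_2)^{a+b+c}} \, du_1 \, du_2 = \frac{\Gamma(a)\Gamma(b)\Gamma(c)}{\Gamma(a+b+c)}$. -/
open MeasureTheory Real


lemma beta_Ioo (p q : ℝ) (hp : 0 < p) (hq : 0 < q) :
    ∫ t in Set.Ioo (0:ℝ) 1, t ^ (p - 1) * (1 - t) ^ (q - 1)
      = Gamma p * Gamma q / Gamma (p + q) := by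
  have hG : Real.Gamma (p + q) ≠ 0 := (Real.Gamma_pos_of_pos (by linarith)).ne'
  have h1 : Complex.betaIntegral p q
      = ((∫ t in Set.Ioo (0:ℝ) 1, t ^ (p - 1) * (1 - t) ^ (q - 1) : ℝ) : ℂ) := by
    rw [Complex.betaIntegral, intervalIntegral.integral_of_le zero_le_one,
      MeasureTheory.integral_Ioc_eq_integral_Ioo]
    have : ∀ t ∈ Set.Ioo (0:ℝ) 1,
        (t:ℂ) ^ ((p:ℂ) - 1) * (1 - (t:ℂ)) ^ ((q:ℂ) - 1)
          = ((t ^ (p - 1) * (1 - t) ^ (q - 1) : ℝ) : ℂ) := by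
      intro t ht
      push_cast
      rw [Complex.ofReal_cpow ht.1.le, Complex.ofReal_cpow (by linarith [ht.2] : (0:ℝ) ≤ 1 - t)]
      push_cast
      ring
    rw [setIntegral_congr_fun measurableSet_Ioo this]
    exact integral_ofReal
  have h2 := Complex.Gamma_mul_Gamma_eq_betaIntegral
    (s := (p:ℂ)) (t := (q:ℂ)) (by simpa using hp) (by simpa using hq)
  rw [h1, ← Complex.ofReal_add, Complex.Gamma_ofReal, Complex.Gamma_ofReal,
    Complex.Gamma_ofReal] at h2
  have h4 : Gamma p * Gamma q
      = Gamma (p + q) * ∫ t in Set.Ioo (0:ℝ) 1, t ^ (p - 1) * (1 - t) ^ (q - 1) := by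
    exact_mod_cast h2
  field_simp
  linarith [h4]


lemma aux_pt (p q d D u : ℝ) (hd : 0 < d) (hD : 0 < D) (hu : 0 < u) (h1u : 0 < 1 - u) :
    (d / D ^ 2) * ((u / D) ^ (p - 1) * (d * (1 - u) / D) ^ (q - 1) / (d / D) ^ (p + q))
      = d ^ (-p) * (u ^ (p - 1) * (1 - u) ^ (q - 1)) := by
  have hDne : ∀ y : ℝ, D ^ y ≠ 0 := fun y => (Real.rpow_pos_of_pos hD y).ne'
  have hdne : ∀ y : ℝ, d ^ y ≠ 0 := fun y => (Real.rpow_pos_of_pos hd y).ne'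
  rw [Real.div_rpow hu.le hD.le, Real.div_rpow (by positivity) hD.le,
    Real.div_rpow hd.le hD.le, Real.mul_rpow hd.le h1u.le]
  field_simp
  refine Real.log_injOn_pos (Set.mem_Ioi.mpr (by positivity)) (Set.mem_Ioi.mpr (by positivity)) ?_
  have lm : ∀ x y : ℝ, 0 < x → 0 < y → Real.log (x * y) = Real.log x + Real.log y :=
    fun x y hx hy => Real.log_mul hx.ne' hy.ne'
  rw [lm _ _ (by positivity) (by positivity), lm _ _ (by positivity) (by positivity),
    lm _ _ (by positivity) (by positivity), lm _ _ (by positivity) (by positivity),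
    lm _ _ (by positivity) (by positivity), lm _ _ (by positivity) (by positivity)]
  simp only [Real.log_rpow, Real.log_pow, hd, hD, hu, h1u, Nat.cast_ofNat]
  ring




lemma euler_sub (p q x : ℝ) (hx0 : 0 < x) (hx1 : x < 1) :
    ∫ t in Set.Ioo (0:ℝ) 1, t ^ (p - 1) * (1 - t) ^ (q - 1) / (1 - x * t) ^ (p + q)
      = (1 - x) ^ (-p) * ∫ t in Set.Ioo (0:ℝ) 1, t ^ (p - 1) * (1 - t) ^ (q - 1) := by
  set d := 1 - x with hdd
  have hd : 0 < d := by rw [hdd]; linarith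
  set f : ℝ → ℝ := fun u => u / (d + x * u) with hf
  have hden : ∀ u : ℝ, 0 ≤ u → 0 < d + x * u := fun u hu => by nlinarith
  have hderiv : ∀ u ∈ Set.Ioo (0:ℝ) 1,
      HasDerivWithinAt f (d / (d + x * u) ^ 2) (Set.Ioo (0:ℝ) 1) u := by
    intro u hu
    have hD := hden u hu.1.le
    have h1 : HasDerivAt (fun u : ℝ => d + x * u) x u := by
      simpa using ((hasDerivAt_id u).const_mul x).const_add d
    have h2 := (hasDerivAt_id u).div h1 hD.ne'
    refine ((h2.congr_deriv ?_).hasDerivWithinAt)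
    field_simp
    simp only [id]; ring
  have hinj : Set.InjOn f (Set.Ioo (0:ℝ) 1) := by
    intro u hu v hv h
    have hDu := hden u hu.1.le
    have hDv := hden v hv.1.le
    rw [hf] at h
    field_simp [hDu.ne', hDv.ne'] at h
    rw [div_eq_iff (by rw [mul_comm u x]; exact hDu.ne')] at h
    nlinarith [h]
  have himg : f '' Set.Ioo (0:ℝ) 1 = Set.Ioo (0:ℝ) 1 := by
    ext t
    constructor
    · rintro ⟨u, hu, rfl⟩
      have hD := hden u hu.1.le
      refine ⟨div_pos hu.1 hD, ?_⟩
      rw [hf]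
      simp only
      rw [div_lt_one hD, hdd]
      nlinarith [hu.2, hu.1]
    · intro ht
      have hxt : 0 < 1 - x * t := by nlinarith [ht.1, ht.2]
      have hu0 : 0 < d * t / (1 - x * t) := div_pos (mul_pos hd ht.1) hxt
      refine ⟨d * t / (1 - x * t), ⟨hu0, ?_⟩, ?_⟩
      · rw [div_lt_one hxt, hdd]; nlinarith [ht.2]
      · have hD2 := hden _ hu0.le
        rw [hf]
        simp only
        rw [div_eq_iff hD2.ne']
        have hxt' : 1 - t * x ≠ 0 := by rw [mul_comm]; exact hxt.ne'
        field_simp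
        ring
  have key := integral_image_eq_integral_abs_deriv_smul measurableSet_Ioo hderiv hinj
    (fun t => t ^ (p - 1) * (1 - t) ^ (q - 1) / (1 - x * t) ^ (p + q))
  rw [himg] at key
  rw [key]
  rw [← integral_const_mul]
  refine setIntegral_congr_fun measurableSet_Ioo fun u hu => ?_
  have hD := hden u hu.1.le
  have e1 : f u = u / (d + x * u) := rfl
  have e2 : 1 - f u = d * (1 - u) / (d + x * u) := by
    rw [e1, eq_div_iff hD.ne', sub_mul, div_mul_cancel₀ _ hD.ne', hdd]; ring
  have e3 : 1 - x * f u = d / (d + x * u) := by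
    rw [e1]; field_simp; ring
  have habs : |d / (d + x * u) ^ 2| = d / (d + x * u) ^ 2 := abs_of_pos (by positivity)
  rw [smul_eq_mul, habs, e1, e2, e3] at *
  rw [aux_pt p q d (d + x * u) u hd hD hu.1 (by linarith [hu.2])]






theorem bivariate_gen_beta_I_normalization (a b c : ℝ) (ha : 0 < a) (hb : 0 < b) (hc : 0 < c) :
    ∫ u₁ in Set.Ioo (0:ℝ) 1, ∫ u₂ in Set.Ioo (0:ℝ) 1,
      u₁ ^ (a - 1) * u₂ ^ (b - 1) * (1 - u₁) ^ (b + c - 1) * (1 - u₂) ^ (a + c - 1) /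
        (1 - u₁ * u₂) ^ (a + b + c)
    = Gamma a * Gamma b * Gamma c / Gamma (a + b + c) := by
  have hB := beta_Ioo b (a + c) hb (by linarith)
  have hA := beta_Ioo a c ha hc
  set B : ℝ := Gamma b * Gamma (a + c) / Gamma (b + (a + c)) with hBdef
  have step1 : ∀ u₁ ∈ Set.Ioo (0:ℝ) 1,
      (∫ u₂ in Set.Ioo (0:ℝ) 1,
        u₁ ^ (a - 1) * u₂ ^ (b - 1) * (1 - u₁) ^ (b + c - 1) * (1 - u₂) ^ (a + c - 1) /
          (1 - u₁ * u₂) ^ (a + b + c))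
        = B * (u₁ ^ (a - 1) * (1 - u₁) ^ (c - 1)) := by
    intro u₁ hu₁
    have h1 : (∫ u₂ in Set.Ioo (0:ℝ) 1,
        u₁ ^ (a - 1) * u₂ ^ (b - 1) * (1 - u₁) ^ (b + c - 1) * (1 - u₂) ^ (a + c - 1) /
          (1 - u₁ * u₂) ^ (a + b + c))
        = ∫ u₂ in Set.Ioo (0:ℝ) 1, (u₁ ^ (a - 1) * (1 - u₁) ^ (b + c - 1)) *
            (u₂ ^ (b - 1) * (1 - u₂) ^ (a + c - 1) / (1 - u₁ * u₂) ^ (b + (a + c))) := by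
      refine setIntegral_congr_fun measurableSet_Ioo fun u₂ _ => ?_
      rw [show b + (a + c) = a + b + c by ring]
      ring
    rw [h1, integral_const_mul, euler_sub b (a + c) u₁ hu₁.1 hu₁.2, hB]
    have h2 : (1 - u₁) ^ (b + c - 1) * (1 - u₁) ^ (-b) = (1 - u₁) ^ (c - 1) := by
      rw [← Real.rpow_add (by linarith [hu₁.2] : (0:ℝ) < 1 - u₁),
        show b + c - 1 + -b = c - 1 by ring]
    calc u₁ ^ (a - 1) * (1 - u₁) ^ (b + c - 1) *
          ((1 - u₁) ^ (-b) * (Gamma b * Gamma (a + c) / Gamma (b + (a + c))))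
        = B * (u₁ ^ (a - 1) * ((1 - u₁) ^ (b + c - 1) * (1 - u₁) ^ (-b))) := by
          rw [hBdef]; ring
      _ = B * (u₁ ^ (a - 1) * (1 - u₁) ^ (c - 1)) := by rw [h2]
  rw [setIntegral_congr_fun measurableSet_Ioo step1, integral_const_mul, hA]
  have hac : Gamma (a + c) ≠ 0 := (Real.Gamma_pos_of_pos (by linarith)).ne'
  have habc : Gamma (a + b + c) ≠ 0 := (Real.Gamma_pos_of_pos (by positivity)).ne'
  rw [hBdef, show b + (a + c) = a + b + c by ring]
  field_simp
end

section
/- For real $a, b, c > 0$ and $0 < x < 1$: $\int_0^x \int_0^x \frac{u_1^{a-1} u_2^{b-1} (1-u_1)^{b+c-1} (1-u_2)^{a+c-1}}{(1-u_1 u_2)^{a+b+c}} du_1 du_2 \le \frac{\Gamma(a)\Gamma(b)\Gamma(c)}{\Gamma(a+b+c)}$, with equality in the limit $x \to 1$. -/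
open MeasureTheory Real Filter

lemma betaIntegrable {p q : ℝ} (hp : 0 < p) (hq : 0 < q) :
    IntegrableOn (fun t : ℝ => t ^ (p-1) * (1-t) ^ (q-1)) (Set.Ioo 0 1) := by
  have h := Complex.betaIntegral_convergent (u := (p:ℂ)) (v := (q:ℂ)) (by simpa) (by simpa)
  have h2 : IntegrableOn (fun x : ℝ => (x:ℂ) ^ ((p:ℂ) - 1) * (1 - (x:ℂ)) ^ ((q:ℂ) - 1))
      (Set.Ioo 0 1) := ((intervalIntegrable_iff_integrableOn_Ioc_of_le zero_le_one).mp h).mono_set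
    Set.Ioo_subset_Ioc_self
  have h3 := h2.re
  refine h3.congr ?_
  filter_upwards [ae_restrict_mem measurableSet_Ioo] with x hx
  have hx0 : (0:ℝ) ≤ x := hx.1.le
  have hx1 : (0:ℝ) ≤ 1 - x := by linarith [hx.2]
  rw [show ((p:ℂ) - 1) = ((p - 1 : ℝ) : ℂ) by push_cast; ring,
    show ((q:ℂ) - 1) = ((q - 1 : ℝ) : ℂ) by push_cast; ring,
    show (1 - (x:ℂ)) = ((1 - x : ℝ) : ℂ) by push_cast; ring,
    ← Complex.ofReal_cpow hx0, ← Complex.ofReal_cpow hx1, ← Complex.ofReal_mul,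
    ]
  simp

lemma betaEval {p q : ℝ} (hp : 0 < p) (hq : 0 < q) :
    ∫ t in Set.Ioo (0:ℝ) 1, t ^ (p-1) * (1-t) ^ (q-1) = Gamma p * Gamma q / Gamma (p+q) := by
  have key := Complex.Gamma_mul_Gamma_eq_betaIntegral (s := (p:ℂ)) (t := (q:ℂ)) (by simpa) (by simpa)
  have hbeta : Complex.betaIntegral p q = ((∫ t in Set.Ioo (0:ℝ) 1, t ^ (p-1) * (1-t) ^ (q-1) : ℝ) : ℂ) := by
    rw [Complex.betaIntegral]
    rw [show (∫ x in (0:ℝ)..1, (x:ℂ) ^ ((p:ℂ) - 1) * (1 - (x:ℂ)) ^ ((q:ℂ) - 1))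
        = ∫ x in (0:ℝ)..1, ((x ^ (p-1) * (1-x) ^ (q-1) : ℝ) : ℂ) from ?_,
      intervalIntegral.integral_ofReal]
    · norm_cast
      rw [intervalIntegral.integral_of_le zero_le_one, integral_Ioc_eq_integral_Ioo]
    · refine intervalIntegral.integral_congr fun x hx => ?_
      rw [Set.uIcc_of_le zero_le_one] at hx
      rw [show ((p:ℂ) - 1) = ((p - 1 : ℝ) : ℂ) by push_cast; ring,
        show ((q:ℂ) - 1) = ((q - 1 : ℝ) : ℂ) by push_cast; ring,
        show (1 - (x:ℂ)) = ((1 - x : ℝ) : ℂ) by push_cast; ring,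
        ← Complex.ofReal_cpow hx.1, ← Complex.ofReal_cpow (by linarith [hx.2]), ← Complex.ofReal_mul]
  rw [hbeta, show ((p:ℂ) + q) = ((p + q : ℝ) : ℂ) by push_cast; ring] at key
  rw [Complex.Gamma_ofReal, Complex.Gamma_ofReal, Complex.Gamma_ofReal] at key
  have : Gamma p * Gamma q = Gamma (p + q) * ∫ t in Set.Ioo (0:ℝ) 1, t ^ (p-1) * (1-t) ^ (q-1) := by
    exact_mod_cast key
  have hG : Gamma (p + q) ≠ 0 := (Real.Gamma_pos_of_pos (by linarith)).ne'
  field_simp [this]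
  rw [this]; ring

noncomputable def mob (z s : ℝ) : ℝ := s / (1 - z + z * s)

lemma mob_hasDeriv {z : ℝ} (hz0 : 0 ≤ z) (hz1 : z < 1) {s : ℝ} (hs : s ∈ Set.Ioo (0:ℝ) 1) :
    HasDerivAt (mob z) ((1 - z) / (1 - z + z * s) ^ 2) s := by
  have hD : 0 < 1 - z + z * s := by nlinarith [hs.1, hs.2]
  have h := (hasDerivAt_id s).div
    (((hasDerivAt_id s).const_mul z).const_add (1 - z)) hD.ne'
  exact h.congr_deriv (by simp only [id]; ring)

lemma mob_injOn {z : ℝ} (hz0 : 0 ≤ z) (hz1 : z < 1) : Set.InjOn (mob z) (Set.Ioo 0 1) := by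
  intro s₁ h₁ s₂ h₂ h
  have hD₁ : 0 < 1 - z + z * s₁ := by nlinarith [h₁.1, h₁.2]
  have hD₂ : 0 < 1 - z + z * s₂ := by nlinarith [h₂.1, h₂.2]
  rw [mob, mob, div_eq_div_iff hD₁.ne' hD₂.ne'] at h
  nlinarith [h]

lemma mob_image {z : ℝ} (hz0 : 0 ≤ z) (hz1 : z < 1) :
    mob z '' Set.Ioo 0 1 = Set.Ioo 0 1 := by
  ext t
  constructor
  · rintro ⟨s, hs, rfl⟩
    have hD : 0 < 1 - z + z * s := by nlinarith [hs.1, hs.2]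
    refine ⟨div_pos hs.1 hD, ?_⟩
    rw [mob, div_lt_one hD]; nlinarith [hs.1, hs.2]
  · intro ht
    have hzt : 0 < 1 - z * t := by nlinarith [ht.1, ht.2]
    refine ⟨t * (1 - z) / (1 - z * t), ⟨?_, ?_⟩, ?_⟩
    · exact div_pos (by nlinarith [ht.1]) hzt
    · rw [div_lt_one hzt]; nlinarith [ht.2]
    · have h1z : (0:ℝ) < 1 - z := by linarith
      have hD' : 1 - z + z * (t * (1 - z) / (1 - z * t)) = (1 - z) / (1 - z * t) := by
        field_simp
        ring
      rw [mob, hD']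
      field_simp
      rw [mul_div_assoc, div_self (by rw [mul_comm]; exact hzt.ne'), mul_one]

lemma key_pointwise {p q z s : ℝ} (hz0 : 0 ≤ z) (hz1 : z < 1) (hs : s ∈ Set.Ioo (0:ℝ) 1) :
    |(1 - z) / (1 - z + z * s) ^ 2| •
      ((mob z s) ^ (p-1) * (1 - mob z s) ^ (q-1) / (1 - z * mob z s) ^ (p+q))
      = ((1 - z) ^ p)⁻¹ * (s ^ (p-1) * (1-s) ^ (q-1)) := by
  obtain ⟨hs0, hs1⟩ := hs
  have h1z : (0:ℝ) < 1 - z := by linarith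
  have h1s : (0:ℝ) < 1 - s := by linarith
  have hD : 0 < 1 - z + z * s := by nlinarith
  have e2 : 1 - mob z s = (1 - z) * (1 - s) / (1 - z + z * s) := by
    rw [mob]; field_simp; ring
  have e3 : 1 - z * mob z s = (1 - z) / (1 - z + z * s) := by
    rw [mob]; field_simp; ring
  rw [e2, e3, smul_eq_mul, abs_of_pos (by positivity), mob]
  rw [Real.div_rpow hs0.le hD.le, Real.div_rpow (by positivity) hD.le,
    Real.div_rpow h1z.le hD.le, Real.mul_rpow h1z.le h1s.le]
  have hne : ∀ (y : ℝ), (1 - z + z * s) ^ y ≠ 0 := fun y => (Real.rpow_pos_of_pos hD y).ne'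
  have hne2 : ∀ (y : ℝ), (1 - z) ^ y ≠ 0 := fun y => (Real.rpow_pos_of_pos h1z y).ne'
  have hZ : (1 - z) ^ (p + q) = (1 - z) * ((1 - z) ^ (q - 1) * (1 - z) ^ p) := by
    rw [show p + q = 1 + (q - 1 + p) by ring, Real.rpow_add h1z, Real.rpow_add h1z,
      Real.rpow_one]
  have hD2 : (1 - z + z * s) ^ (p + q)
      = (1 - z + z * s) ^ 2 * ((1 - z + z * s) ^ (p - 1) * (1 - z + z * s) ^ (q - 1)) := by
    rw [show p + q = ((2:ℕ):ℝ) + (p - 1 + (q - 1)) by push_cast; ring, Real.rpow_add hD,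
      Real.rpow_natCast, Real.rpow_add hD]
  rw [hD2, hZ]
  field_simp

lemma inner_integrand_eq {p q z : ℝ} (hz0 : 0 ≤ z) (hz1 : z < 1) :
    ∀ s ∈ Set.Ioo (0:ℝ) 1,
      |(1 - z) / (1 - z + z * s) ^ 2| •
        ((mob z s) ^ (p-1) * (1 - mob z s) ^ (q-1) / (1 - z * mob z s) ^ (p+q))
      = ((1 - z) ^ p)⁻¹ * (s ^ (p-1) * (1-s) ^ (q-1)) :=
  fun _ hs => key_pointwise hz0 hz1 hs

lemma inner_eval {p q z : ℝ} (hp : 0 < p) (hq : 0 < q) (hz0 : 0 ≤ z) (hz1 : z < 1) :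
    ∫ t in Set.Ioo (0:ℝ) 1, t ^ (p-1) * (1-t) ^ (q-1) / (1 - z * t) ^ (p+q)
      = Gamma p * Gamma q / Gamma (p+q) / (1 - z) ^ p := by
  have hderiv : ∀ s ∈ Set.Ioo (0:ℝ) 1,
      HasDerivWithinAt (mob z) ((1 - z) / (1 - z + z * s) ^ 2) (Set.Ioo 0 1) s :=
    fun s hs => (mob_hasDeriv hz0 hz1 hs).hasDerivWithinAt
  calc ∫ t in Set.Ioo (0:ℝ) 1, t ^ (p-1) * (1-t) ^ (q-1) / (1 - z * t) ^ (p+q)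
      = ∫ t in mob z '' Set.Ioo (0:ℝ) 1, t ^ (p-1) * (1-t) ^ (q-1) / (1 - z * t) ^ (p+q) := by
        rw [mob_image hz0 hz1]
    _ = ∫ s in Set.Ioo (0:ℝ) 1, |(1 - z) / (1 - z + z * s) ^ 2| •
          ((mob z s) ^ (p-1) * (1 - mob z s) ^ (q-1) / (1 - z * mob z s) ^ (p+q)) :=
        integral_image_eq_integral_abs_deriv_smul measurableSet_Ioo hderiv (mob_injOn hz0 hz1) _
    _ = ∫ s in Set.Ioo (0:ℝ) 1, ((1 - z) ^ p)⁻¹ * (s ^ (p-1) * (1-s) ^ (q-1)) :=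
        setIntegral_congr_fun measurableSet_Ioo (inner_integrand_eq hz0 hz1)
    _ = ((1 - z) ^ p)⁻¹ * ∫ s in Set.Ioo (0:ℝ) 1, s ^ (p-1) * (1-s) ^ (q-1) :=
        MeasureTheory.integral_const_mul _ _
    _ = Gamma p * Gamma q / Gamma (p+q) / (1 - z) ^ p := by
        rw [betaEval hp hq]; ring

lemma inner_integrable {p q z : ℝ} (hp : 0 < p) (hq : 0 < q) (hz0 : 0 ≤ z) (hz1 : z < 1) :
    IntegrableOn (fun t : ℝ => t ^ (p-1) * (1-t) ^ (q-1) / (1 - z * t) ^ (p+q))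
      (Set.Ioo 0 1) := by
  have hderiv : ∀ s ∈ Set.Ioo (0:ℝ) 1,
      HasDerivWithinAt (mob z) ((1 - z) / (1 - z + z * s) ^ 2) (Set.Ioo 0 1) s :=
    fun s hs => (mob_hasDeriv hz0 hz1 hs).hasDerivWithinAt
  have h := (integrableOn_image_iff_integrableOn_abs_deriv_smul measurableSet_Ioo hderiv
    (mob_injOn hz0 hz1) (fun t : ℝ => t ^ (p-1) * (1-t) ^ (q-1) / (1 - z * t) ^ (p+q)))
  rw [mob_image hz0 hz1] at h
  rw [h]
  refine ((betaIntegrable hp hq).const_mul (((1 - z) ^ p)⁻¹)).congr ?_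
  filter_upwards [ae_restrict_mem measurableSet_Ioo] with s hs
  exact (key_pointwise hz0 hz1 hs).symm

noncomputable def G2 (a b c : ℝ) : ℝ × ℝ → ℝ := fun p =>
  p.1 ^ (a-1) * p.2 ^ (b-1) * (1-p.1) ^ (b+c-1) * (1-p.2) ^ (a+c-1) / (1 - p.1*p.2) ^ (a+b+c)

lemma G2_meas (a b c : ℝ) : Measurable (G2 a b c) := by
  unfold G2
  fun_prop

lemma G2_pos {a b c : ℝ} {u v : ℝ} (hu : u ∈ Set.Ioo (0:ℝ) 1) (hv : v ∈ Set.Ioo (0:ℝ) 1) :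
    0 < G2 a b c (u, v) := by
  have h1 : (0:ℝ) < 1 - u * v := by nlinarith [hu.1, hu.2, hv.1, hv.2]
  have h2 : (0:ℝ) < 1 - u := by linarith [hu.2]
  have h3 : (0:ℝ) < 1 - v := by linarith [hv.2]
  unfold G2
  have := hu.1; have := hv.1
  positivity

lemma G2_section {a b c : ℝ} (u₁ : ℝ) :
    (fun u₂ => G2 a b c (u₁, u₂)) = fun u₂ =>
      (u₁ ^ (a-1) * (1-u₁) ^ (b+c-1)) *
        (u₂ ^ (b-1) * (1-u₂) ^ (a+c-1) / (1 - u₁*u₂) ^ (b+(a+c))) := by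
  funext u₂
  unfold G2
  rw [show b+(a+c) = a+b+c by ring]
  ring

lemma inner_formula {a b c : ℝ} (ha : 0 < a) (hb : 0 < b) (hc : 0 < c) {u₁ : ℝ}
    (hu₁ : u₁ ∈ Set.Ioo (0:ℝ) 1) :
    ∫ u₂ in Set.Ioo (0:ℝ) 1, G2 a b c (u₁, u₂)
      = (Gamma b * Gamma (a+c) / Gamma (a+b+c)) * (u₁ ^ (a-1) * (1-u₁) ^ (c-1)) := by
  have h1u : (0:ℝ) < 1 - u₁ := by linarith [hu₁.2]
  rw [show (fun u₂ => G2 a b c (u₁, u₂)) = _ from G2_section u₁, MeasureTheory.integral_const_mul,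
    inner_eval hb (add_pos ha hc) hu₁.1.le hu₁.2,
    show b + (a + c) = a + b + c by ring]
  have key : (1-u₁) ^ (b+c-1) = (1-u₁) ^ (c-1) * (1-u₁) ^ b := by
    rw [← Real.rpow_add h1u, show c - 1 + b = b + c - 1 by ring]
  have hne : (1-u₁) ^ b ≠ 0 := (Real.rpow_pos_of_pos h1u b).ne'
  rw [key]
  field_simp

lemma G2_integrable {a b c : ℝ} (ha : 0 < a) (hb : 0 < b) (hc : 0 < c) :
    IntegrableOn (G2 a b c) (Set.Ioo (0:ℝ) 1 ×ˢ Set.Ioo (0:ℝ) 1) (volume.prod volume) := by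
  rw [IntegrableOn, ← Measure.prod_restrict]
  refine (integrable_prod_iff (G2_meas a b c).aestronglyMeasurable).2 ⟨?_, ?_⟩
  · filter_upwards [ae_restrict_mem measurableSet_Ioo] with u₁ hu₁
    have h := (inner_integrable hb (add_pos ha hc) hu₁.1.le hu₁.2).const_mul
      (u₁ ^ (a-1) * (1-u₁) ^ (b+c-1))
    refine h.congr (Filter.Eventually.of_forall fun u₂ => ?_)
    rw [G2_section u₁]
  · refine (((betaIntegrable ha hc).const_mul
      (Gamma b * Gamma (a+c) / Gamma (a+b+c))).congr ?_)
    filter_upwards [ae_restrict_mem measurableSet_Ioo] with u₁ hu₁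
    rw [show (∫ u₂ in Set.Ioo (0:ℝ) 1, ‖G2 a b c (u₁, u₂)‖)
        = ∫ u₂ in Set.Ioo (0:ℝ) 1, G2 a b c (u₁, u₂) from
      setIntegral_congr_fun measurableSet_Ioo fun u₂ hu₂ =>
        norm_of_nonneg (G2_pos hu₁ hu₂).le, inner_formula ha hb hc hu₁]

lemma full_eval {a b c : ℝ} (ha : 0 < a) (hb : 0 < b) (hc : 0 < c) :
    ∫ u₁ in Set.Ioo (0:ℝ) 1, ∫ u₂ in Set.Ioo (0:ℝ) 1, G2 a b c (u₁, u₂)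
      = Gamma a * Gamma b * Gamma c / Gamma (a+b+c) := by
  rw [setIntegral_congr_fun measurableSet_Ioo
      (fun u₁ hu₁ => inner_formula ha hb hc hu₁),
    MeasureTheory.integral_const_mul, betaEval ha hc]
  have h1 : Gamma (a+c) ≠ 0 := (Real.Gamma_pos_of_pos (by linarith)).ne'
  have h2 : Gamma (a+b+c) ≠ 0 := (Real.Gamma_pos_of_pos (by linarith)).ne'
  field_simp

noncomputable def Fcdf (a b c x : ℝ) : ℝ :=
  ∫ u₁ in Set.Ioo (0:ℝ) x, ∫ u₂ in Set.Ioo (0:ℝ) x,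
    u₁ ^ (a - 1) * u₂ ^ (b - 1) * (1 - u₁) ^ (b + c - 1) * (1 - u₂) ^ (a + c - 1) /
      (1 - u₁ * u₂) ^ (a + b + c)

lemma Fcdf_prod {a b c : ℝ} (ha : 0 < a) (hb : 0 < b) (hc : 0 < c) {x : ℝ} (hx : x ≤ 1) :
    Fcdf a b c x = ∫ z in Set.Ioo (0:ℝ) x ×ˢ Set.Ioo (0:ℝ) x, G2 a b c z
      ∂(volume.prod volume) := by
  have hsub : Set.Ioo (0:ℝ) x ×ˢ Set.Ioo (0:ℝ) x ⊆ Set.Ioo (0:ℝ) 1 ×ˢ Set.Ioo (0:ℝ) 1 :=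
    Set.prod_mono (Set.Ioo_subset_Ioo le_rfl hx) (Set.Ioo_subset_Ioo le_rfl hx)
  rw [setIntegral_prod _ ((G2_integrable ha hb hc).mono_set hsub)]
  rfl

lemma G2_ae_nonneg {a b c : ℝ} {s : Set (ℝ × ℝ)} (hs : MeasurableSet s)
    (hsub : s ⊆ Set.Ioo (0:ℝ) 1 ×ˢ Set.Ioo (0:ℝ) 1) :
    0 ≤ᶠ[ae ((volume.prod volume).restrict s)] G2 a b c := by
  filter_upwards [ae_restrict_mem hs] with z hz
  exact (G2_pos (hsub hz).1 (hsub hz).2).le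

theorem bivariate_gen_beta_I_cdf_le_and_tendsto (a b c : ℝ)
    (ha : 0 < a) (hb : 0 < b) (hc : 0 < c) :
    (∀ x : ℝ, 0 < x → x < 1 →
      (∫ u₁ in Set.Ioo (0:ℝ) x, ∫ u₂ in Set.Ioo (0:ℝ) x,
        u₁ ^ (a - 1) * u₂ ^ (b - 1) * (1 - u₁) ^ (b + c - 1) * (1 - u₂) ^ (a + c - 1) /
          (1 - u₁ * u₂) ^ (a + b + c))
        ≤ Gamma a * Gamma b * Gamma c / Gamma (a + b + c)) ∧
    Tendsto (fun x : ℝ =>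
      ∫ u₁ in Set.Ioo (0:ℝ) x, ∫ u₂ in Set.Ioo (0:ℝ) x,
        u₁ ^ (a - 1) * u₂ ^ (b - 1) * (1 - u₁) ^ (b + c - 1) * (1 - u₂) ^ (a + c - 1) /
          (1 - u₁ * u₂) ^ (a + b + c))
      (nhdsWithin 1 (Set.Iio 1))
      (nhds (Gamma a * Gamma b * Gamma c / Gamma (a + b + c))) := by
  set L := Gamma a * Gamma b * Gamma c / Gamma (a + b + c) with hLdef
  have hInt := G2_integrable ha hb hc
  have hs1 : MeasurableSet (Set.Ioo (0:ℝ) 1 ×ˢ Set.Ioo (0:ℝ) 1) :=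
    measurableSet_Ioo.prod measurableSet_Ioo
  have hL : ∫ z in Set.Ioo (0:ℝ) 1 ×ˢ Set.Ioo (0:ℝ) 1, G2 a b c z ∂(volume.prod volume)
      = L := by
    rw [setIntegral_prod _ hInt]
    exact full_eval ha hb hc
  -- the bound
  have hbound : ∀ x : ℝ, x ≤ 1 → Fcdf a b c x ≤ L := by
    intro x hx
    rw [Fcdf_prod ha hb hc hx, ← hL]
    exact setIntegral_mono_set hInt (G2_ae_nonneg hs1 le_rfl)
      ((Set.prod_mono (Set.Ioo_subset_Ioo le_rfl hx)
        (Set.Ioo_subset_Ioo le_rfl hx)).eventuallyLE)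
  -- monotonicity
  have hmono : MonotoneOn (Fcdf a b c) (Set.Iio (1:ℝ)) := by
    intro x hx y hy hxy
    rw [Fcdf_prod ha hb hc (le_of_lt hx), Fcdf_prod ha hb hc (le_of_lt hy)]
    have hsuby : Set.Ioo (0:ℝ) y ×ˢ Set.Ioo (0:ℝ) y ⊆ Set.Ioo (0:ℝ) 1 ×ˢ Set.Ioo (0:ℝ) 1 :=
      Set.prod_mono (Set.Ioo_subset_Ioo le_rfl hy.le) (Set.Ioo_subset_Ioo le_rfl hy.le)
    exact setIntegral_mono_set (hInt.mono_set hsuby)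
      (G2_ae_nonneg (measurableSet_Ioo.prod measurableSet_Ioo) hsuby)
      ((Set.prod_mono (Set.Ioo_subset_Ioo le_rfl hxy)
        (Set.Ioo_subset_Ioo le_rfl hxy)).eventuallyLE)
  -- sequence
  set xseq : ℕ → ℝ := fun n => 1 - 1 / (n + 1) with hxseq
  have hxseq_lt : ∀ n : ℕ, xseq n < 1 := by
    intro n
    have : (0:ℝ) < 1 / (n + 1) := by positivity
    simp only [hxseq]; linarith
  have hφmono : Monotone (fun n : ℕ => Set.Ioo (0:ℝ) (xseq n) ×ˢ Set.Ioo (0:ℝ) (xseq n)) := by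
    intro m n hmn
    have hle : xseq m ≤ xseq n := by
      have h1 : (1:ℝ) / (n + 1) ≤ 1 / (m + 1) := by
        apply one_div_le_one_div_of_le (by positivity)
        have := (Nat.cast_le (α := ℝ)).2 hmn; linarith
      simp only [hxseq]; linarith
    exact Set.prod_mono (Set.Ioo_subset_Ioo le_rfl hle) (Set.Ioo_subset_Ioo le_rfl hle)
  have hunion : (⋃ n : ℕ, Set.Ioo (0:ℝ) (xseq n) ×ˢ Set.Ioo (0:ℝ) (xseq n))
      = Set.Ioo (0:ℝ) 1 ×ˢ Set.Ioo (0:ℝ) 1 := by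
    apply Set.Subset.antisymm
    · refine Set.iUnion_subset fun n =>
        Set.prod_mono (Set.Ioo_subset_Ioo le_rfl (hxseq_lt n).le)
          (Set.Ioo_subset_Ioo le_rfl (hxseq_lt n).le)
    · rintro ⟨u, v⟩ ⟨hu, hv⟩
      obtain ⟨n, hn⟩ := exists_nat_one_div_lt (show (0:ℝ) < 1 - max u v by
        simp only [sub_pos, max_lt_iff]; exact ⟨hu.2, hv.2⟩)
      refine Set.mem_iUnion.2 ⟨n, ⟨hu.1, ?_⟩, ⟨hv.1, ?_⟩⟩
      · simp only [hxseq]; have := le_max_left u v; linarith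
      · simp only [hxseq]; have := le_max_right u v; linarith
  have htend : Tendsto (fun n : ℕ => Fcdf a b c (xseq n)) atTop (nhds L) := by
    have h := tendsto_setIntegral_of_monotone
      (fun n : ℕ => (measurableSet_Ioo.prod measurableSet_Ioo :
        MeasurableSet (Set.Ioo (0:ℝ) (xseq n) ×ˢ Set.Ioo (0:ℝ) (xseq n))))
      hφmono (by rw [hunion]; exact hInt)
    rw [hunion, hL] at h
    refine h.congr fun n => ?_
    rw [Fcdf_prod ha hb hc (hxseq_lt n).le]
  -- sup identification
  have hne : (Fcdf a b c '' Set.Iio 1).Nonempty := ⟨Fcdf a b c 0, 0, by norm_num, rfl⟩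
  have hbdd : BddAbove (Fcdf a b c '' Set.Iio 1) := by
    refine ⟨L, ?_⟩
    rintro _ ⟨x, hx, rfl⟩
    exact hbound x (le_of_lt hx)
  have hsup : sSup (Fcdf a b c '' Set.Iio 1) = L := by
    refine le_antisymm (csSup_le hne ?_) ?_
    · rintro _ ⟨x, hx, rfl⟩
      exact hbound x (le_of_lt hx)
    · refine le_of_tendsto htend (Filter.Eventually.of_forall fun n => ?_)
      exact le_csSup hbdd ⟨xseq n, hxseq_lt n, rfl⟩
  refine ⟨fun x hx0 hx1 => hbound x hx1.le, ?_⟩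
  have := hmono.tendsto_nhdsLT hbdd
  rw [hsup] at this
  exact this
end

section
/- Let $U_1, U_2$ have the bivariate generalised beta type I density $f(u_1,u_2) = \frac{\Gamma(a+b+c)}{\Gamma(a)\Gamma(b)\Gamma(c)} \cdot \frac{u_1^{a-1}u_2^{b-1}(1-u_1)^{b+c-1}(1-u_2)^{a+c-1}}{(1-u_1u_2)^{a+b+c}}$ on $(0,1)^2$ with $a,b,c>0$. Then the marginal density of $U_1$ is the Beta$(a, c)$ density $\frac{\Gamma(a+c)}{\Gamma(a)\Gamma(c)} u_1^{a-1}(1-u_1)^{c-1}$ on $(0,1)$. -/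
open MeasureTheory Real

lemma betaIoo (p q : ℝ) (hp : 0 < p) (hq : 0 < q) :
    ∫ x in Set.Ioo (0:ℝ) 1, x ^ (p - 1) * (1 - x) ^ (q - 1)
      = Gamma p * Gamma q / Gamma (p + q) := by
  have h := Complex.Gamma_mul_Gamma_eq_betaIntegral (s := (p:ℂ)) (t := (q:ℂ))
    (by simpa using hp) (by simpa using hq)
  have key : ∀ x ∈ Set.Ioc (0:ℝ) 1,
      (x:ℂ) ^ ((p:ℂ) - 1) * (1 - (x:ℂ)) ^ ((q:ℂ) - 1)
        = ((x ^ (p - 1) * (1 - x) ^ (q - 1) : ℝ) : ℂ) := by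
    intro x hx
    rw [Complex.ofReal_mul, Complex.ofReal_cpow hx.1.le,
      Complex.ofReal_cpow (by linarith [hx.2] : (0:ℝ) ≤ 1 - x)]
    push_cast
    ring
  have hbe : Complex.betaIntegral (p:ℂ) (q:ℂ)
      = ((∫ x in Set.Ioo (0:ℝ) 1, x ^ (p - 1) * (1 - x) ^ (q - 1) : ℝ) : ℂ) :=
    calc Complex.betaIntegral (p:ℂ) (q:ℂ)
        = ∫ x in Set.Ioc (0:ℝ) 1, (x:ℂ) ^ ((p:ℂ) - 1) * (1 - (x:ℂ)) ^ ((q:ℂ) - 1) := by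
          rw [Complex.betaIntegral, intervalIntegral.integral_of_le zero_le_one]
      _ = ∫ x in Set.Ioc (0:ℝ) 1, ((x ^ (p - 1) * (1 - x) ^ (q - 1) : ℝ) : ℂ) :=
          setIntegral_congr_fun measurableSet_Ioc key
      _ = ((∫ x in Set.Ioc (0:ℝ) 1, x ^ (p - 1) * (1 - x) ^ (q - 1) : ℝ) : ℂ) :=
          integral_ofReal
      _ = _ := by rw [MeasureTheory.integral_Ioc_eq_integral_Ioo]
  rw [hbe, ← Complex.ofReal_add, Complex.Gamma_ofReal, Complex.Gamma_ofReal,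
    Complex.Gamma_ofReal] at h
  have h' : Gamma p * Gamma q = Gamma (p + q) * ∫ x in Set.Ioo (0:ℝ) 1,
      x ^ (p - 1) * (1 - x) ^ (q - 1) := by exact_mod_cast h
  have hg : Gamma (p + q) ≠ 0 := (Gamma_pos_of_pos (by linarith)).ne'
  field_simp
  linarith [h']


lemma subKey (β γ : ℝ) {x : ℝ} (hx0 : 0 < x) (hx1 : x < 1) :
    ∫ t in Set.Ioo (0:ℝ) 1, t ^ (β - 1) * (1 - t) ^ (γ - 1) / (1 - x * t) ^ (β + γ)
      = (1 - x) ^ (-β) * ∫ s in Set.Ioo (0:ℝ) 1, s ^ (β - 1) * (1 - s) ^ (γ - 1) := by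
  have hx' : 0 < 1 - x := by linarith
  set f : ℝ → ℝ := fun t => t * (1 - x) / (1 - x * t) with hf
  have hD : ∀ t ∈ Set.Ioo (0:ℝ) 1, 0 < 1 - x * t := by
    rintro t ⟨ht0, ht1⟩; nlinarith
  -- image
  have himg : f '' Set.Ioo (0:ℝ) 1 = Set.Ioo (0:ℝ) 1 := by
    ext s
    constructor
    · rintro ⟨t, ht, rfl⟩
      have hDt := hD t ht
      obtain ⟨ht0, ht1⟩ := ht
      constructor
      · positivity
      · rw [div_lt_one hDt]; nlinarith
    · rintro ⟨hs0, hs1⟩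
      refine ⟨s / (1 - x + x * s), ?_, ?_⟩
      · have hd : 0 < 1 - x + x * s := by nlinarith
        constructor
        · positivity
        · rw [div_lt_one hd]; nlinarith
      · have hd : (1 - x + x * s) ≠ 0 := by nlinarith
        simp only [hf]; rw [show 1 - x * (s / (1 - x + x * s)) = (1 - x) / (1 - x + x * s) by rw [eq_div_iff hd, sub_mul, mul_div_assoc', div_mul_cancel₀ _ hd]; ring]; field_simp [hx'.ne']
        try ring
  -- derivative
  have hderiv : ∀ t ∈ Set.Ioo (0:ℝ) 1,
      HasDerivWithinAt f ((1 - x) / (1 - x * t) ^ 2) (Set.Ioo (0:ℝ) 1) t := by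
    intro t ht
    have hDt := hD t ht
    have h1 : HasDerivAt (fun t : ℝ => t * (1 - x)) (1 - x) t := by
      simpa using (hasDerivAt_id t).mul_const (1 - x)
    have h2 : HasDerivAt (fun t : ℝ => 1 - x * t) (-x) t := by
      simpa using ((hasDerivAt_id t).const_mul x).const_sub 1
    have := (h1.div h2 hDt.ne')
    have e : (1 - x) / (1 - x * t) ^ 2 = ((1 - x) * (1 - x * t) - t * (1 - x) * -x) / (1 - x * t) ^ 2 := by
      rw [div_left_inj' (pow_ne_zero 2 hDt.ne')]
      ring
    rw [e]
    exact this.hasDerivWithinAt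
  -- injectivity
  have hinj : Set.InjOn f (Set.Ioo (0:ℝ) 1) := by
    intro t₁ h₁ t₂ h₂ hft
    have d₁ := hD t₁ h₁
    have d₂ := hD t₂ h₂
    rw [hf] at hft
    rw [div_eq_div_iff d₁.ne' d₂.ne'] at hft
    have h5 : (1 - x) * (t₁ - t₂) = 0 := by linear_combination hft
    rcases mul_eq_zero.1 h5 with h | h
    · linarith
    · linarith
  have key := integral_image_eq_integral_abs_deriv_smul measurableSet_Ioo hderiv hinj
    (fun s => s ^ (β - 1) * (1 - s) ^ (γ - 1))
  rw [himg] at key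
  -- pointwise computation of the transformed integrand
  have hpt : ∀ t ∈ Set.Ioo (0:ℝ) 1,
      |((1 - x) / (1 - x * t) ^ 2)| • (f t ^ (β - 1) * (1 - f t) ^ (γ - 1))
        = (1 - x) ^ β * (t ^ (β - 1) * (1 - t) ^ (γ - 1) / (1 - x * t) ^ (β + γ)) := by
    intro t ht
    have hDt := hD t ht
    obtain ⟨ht0, ht1⟩ := ht
    have h1t : 0 < 1 - t := by linarith
    simp only [smul_eq_mul, hf]
    have h2 : 1 - t * (1 - x) / (1 - x * t) = (1 - t) / (1 - x * t) := by
      rw [eq_div_iff hDt.ne', sub_mul, div_mul_cancel₀ _ hDt.ne']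
      ring
    have h3 : (t * (1 - x) / (1 - x * t)) ^ (β - 1)
        = t ^ (β - 1) * (1 - x) ^ (β - 1) * ((1 - x * t) ^ (β - 1))⁻¹ := by
      rw [Real.div_rpow (by positivity) hDt.le, Real.mul_rpow ht0.le hx'.le, div_eq_mul_inv]
    have h4 : ((1 - t) / (1 - x * t)) ^ (γ - 1)
        = (1 - t) ^ (γ - 1) * ((1 - x * t) ^ (γ - 1))⁻¹ := by
      rw [Real.div_rpow h1t.le hDt.le, div_eq_mul_inv]
    have h1 : |((1 - x) / (1 - x * t) ^ 2)| = (1 - x) * ((1 - x * t) ^ (2:ℝ))⁻¹ := by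
      rw [abs_of_pos (by positivity), div_eq_mul_inv, ← Real.rpow_natCast (1 - x * t) 2]
      norm_num
    rw [h2, h1, h3, h4]
    have hA : (1 - x) ^ β = (1 - x) * (1 - x) ^ (β - 1) := by
      rw [show β = 1 + (β - 1) by ring, Real.rpow_add hx', Real.rpow_one]
      ring_nf
    have hB : (1 - x * t) ^ (β + γ)
        = (1 - x * t) ^ (2:ℝ) * (1 - x * t) ^ (β - 1) * (1 - x * t) ^ (γ - 1) := by
      rw [← Real.rpow_add hDt, ← Real.rpow_add hDt]
      congr 1
      ring
    rw [hA, hB]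
    have p1 : (0:ℝ) < (1 - x * t) ^ (2:ℝ) := by positivity
    have p2 : (0:ℝ) < (1 - x * t) ^ (β - 1) := by positivity
    have p3 : (0:ℝ) < (1 - x * t) ^ (γ - 1) := by positivity
    field_simp
  rw [setIntegral_congr_fun measurableSet_Ioo hpt] at key
  rw [MeasureTheory.integral_const_mul] at key
  rw [key, Real.rpow_neg hx'.le, inv_mul_cancel_left₀ (by positivity)]

theorem bivariate_gen_beta_I_marginal (a b c : ℝ) (ha : 0 < a) (hb : 0 < b) (hc : 0 < c) :
    ∀ u₁ : ℝ, 0 < u₁ → u₁ < 1 →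
      (∫ u₂ in Set.Ioo (0:ℝ) 1,
        Gamma (a + b + c) / (Gamma a * Gamma b * Gamma c) *
          (u₁ ^ (a - 1) * u₂ ^ (b - 1) * (1 - u₁) ^ (b + c - 1) * (1 - u₂) ^ (a + c - 1) /
            (1 - u₁ * u₂) ^ (a + b + c)))
      = Gamma (a + c) / (Gamma a * Gamma c) * (u₁ ^ (a - 1) * (1 - u₁) ^ (c - 1)) := by
  intro u₁ h0 h1
  have hx' : (0:ℝ) < 1 - u₁ := by linarith
  have hfun : (fun u₂ : ℝ => Gamma (a + b + c) / (Gamma a * Gamma b * Gamma c) *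
          (u₁ ^ (a - 1) * u₂ ^ (b - 1) * (1 - u₁) ^ (b + c - 1) * (1 - u₂) ^ (a + c - 1) /
            (1 - u₁ * u₂) ^ (a + b + c)))
      = fun u₂ : ℝ => (Gamma (a + b + c) / (Gamma a * Gamma b * Gamma c) *
          (u₁ ^ (a - 1) * (1 - u₁) ^ (b + c - 1))) *
          (u₂ ^ (b - 1) * (1 - u₂) ^ (a + c - 1) / (1 - u₁ * u₂) ^ (b + (a + c))) := by
    funext u₂
    rw [show b + (a + c) = a + b + c by ring]
    ring
  rw [hfun, MeasureTheory.integral_const_mul, subKey b (a + c) h0 h1,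
    betaIoo b (a + c) hb (by linarith)]
  rw [show b + (a + c) = a + b + c by ring]
  have hpow : (1 - u₁) ^ (b + c - 1) * (1 - u₁) ^ (-b) = (1 - u₁) ^ (c - 1) := by
    rw [← Real.rpow_add hx']
    congr 1
    ring
  have hGa := (Gamma_pos_of_pos ha).ne'
  have hGb := (Gamma_pos_of_pos hb).ne'
  have hGc := (Gamma_pos_of_pos hc).ne'
  have hGabc := (Gamma_pos_of_pos (show (0:ℝ) < a + b + c by linarith)).ne'
  have step : Gamma (a + b + c) / (Gamma a * Gamma b * Gamma c) *
        (u₁ ^ (a - 1) * (1 - u₁) ^ (b + c - 1)) *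
        ((1 - u₁) ^ (-b) * (Gamma b * Gamma (a + c) / Gamma (a + b + c)))
      = Gamma (a + c) / (Gamma a * Gamma c) *
        (u₁ ^ (a - 1) * ((1 - u₁) ^ (b + c - 1) * (1 - u₁) ^ (-b))) := by
    field_simp
  rw [step, hpow]
end
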